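/- Let m ≥ 1, k ∈ {±1}^m with ∏_{j=1}^m k_j = 1, and n ≥ 3. Let M ∈ ℂ^{nm×nm} be the block circulant matrix P ⊗ A_{-1} + I_n ⊗ B + P* ⊗ C built from the symbol decomposition of a^k. Then for every j ∈ {1,…,n−1} with j ≠ n/2, every eigenvalue λ of a^k(2πj/n) is an eigenvalue of M with eigenspace of dimension at least 2. -/

import Mathlib

open Complex Matrix Kronecker

/-- The symbol matrix `a^k(φ) ∈ ℂ^{m×m}` of an `m`-periodic tridiagonal sign operator:
superdiagonal entries `1`, subdiagonal entries `k₁,…,k_{m-1}` (here `k 0, …, k (m-2)`),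
corner entries `k_m e^{iφ}` at position `(1,m)` and `e^{-iφ}` at position `(m,1)`.
The entries are defined as sums so that for small `m` overlapping positions add up
(e.g. for `m = 1` the matrix is `(k₁ e^{iφ} + e^{-iφ})`). -/
noncomputable def symb (m : ℕ) (k : ℕ → ℂ) (φ : ℝ) : Matrix (Fin m) (Fin m) ℂ :=
  Matrix.of fun r c =>
    (if (c : ℕ) = (r : ℕ) + 1 then 1 else 0) +
    (if (r : ℕ) = (c : ℕ) + 1 then k c else 0) +
    (if (r : ℕ) = 0 ∧ (c : ℕ) = m - 1 then k c * Complex.exp (φ * Complex.I) else 0) +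
    (if (r : ℕ) = m - 1 ∧ (c : ℕ) = 0 then Complex.exp (-φ * Complex.I) else 0)

/-- The corner block `A₋₁ ∈ ℂ^{m×m}`: `(A₋₁)_{1,m} = k_m`, zeros elsewhere. -/
def Am (m : ℕ) (k : ℕ → ℂ) : Matrix (Fin m) (Fin m) ℂ :=
  Matrix.of fun r c => if (r : ℕ) = 0 ∧ (c : ℕ) = m - 1 then k c else 0

/-- The tridiagonal block `B ∈ ℂ^{m×m}`: superdiagonal entries `1`, subdiagonal entries
`k₁,…,k_{m-1}`, zeros elsewhere. -/
def Bm (m : ℕ) (k : ℕ → ℂ) : Matrix (Fin m) (Fin m) ℂ :=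
  Matrix.of fun r c =>
    (if (c : ℕ) = (r : ℕ) + 1 then 1 else 0) + (if (r : ℕ) = (c : ℕ) + 1 then k c else 0)

/-- The corner block `C ∈ ℂ^{m×m}`: `C_{m,1} = 1`, zeros elsewhere. -/
def Cm (m : ℕ) : Matrix (Fin m) (Fin m) ℂ :=
  Matrix.of fun r c => if (r : ℕ) = m - 1 ∧ (c : ℕ) = 0 then 1 else 0

/-- If `∏ⱼ kⱼ = 1` and `n ≥ 3`, then for every `j ∈ {1,…,n−1}` with
`j ≠ n/2`, every eigenvalue `λ` of `a^k(2πj/n)` is an eigenvalue of the block circulant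
`M = P ⊗ A₋₁ + I ⊗ B + P* ⊗ C` with eigenspace of dimension at least `2`. -/
lemma det_symb_neg (m : ℕ) (hm : 1 ≤ m) (k : ℕ → ℂ) (hk : ∀ i < m, k i = 1 ∨ k i = -1)
    (hprod : ∏ j ∈ Finset.range m, k j = 1) (φ : ℝ) (lam : ℂ) :
    (lam • (1 : Matrix (Fin m) (Fin m) ℂ) - symb m k (-φ)).det
      = (lam • 1 - symb m k φ).det := by
  set d : Fin m → ℂ := fun r => ∏ i ∈ Finset.Ico (r : ℕ) (m - 1), k i with hd
  have hksq : ∀ i < m, k i * k i = 1 := by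
    intro i hi; rcases hk i hi with h | h <;> simp [h]
  have hdlast : ∀ r : Fin m, (r : ℕ) = m - 1 → d r = 1 := by
    intro r hr; simp [hd, hr]
  have hdpeel : ∀ a b : Fin m, (b : ℕ) = (a : ℕ) + 1 → d a = k a * d b := by
    intro a b hb
    have hab : (a : ℕ) < m - 1 := by have := b.isLt; omega
    simp only [hd]
    rw [Finset.prod_eq_prod_Ico_succ_bot hab, hb]
  have hdzero : ∀ c : Fin m, (c : ℕ) = 0 → k (m - 1) * d c = 1 := by
    intro c hc
    have hm1 : m = (m - 1) + 1 := by omega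
    have hsplit : ∏ j ∈ Finset.range m, k j
        = (∏ i ∈ Finset.Ico 0 (m - 1), k i) * k (m - 1) := by
      conv_lhs => rw [hm1]
      rw [Finset.prod_range_succ, Finset.range_eq_Ico]
    simp only [hd, hc]
    rw [hsplit] at hprod
    rw [mul_comm]; exact hprod
  have hdne : ∀ r : Fin m, d r ≠ 0 := by
    intro r
    simp only [hd]
    apply Finset.prod_ne_zero_iff.mpr
    intro i hi
    have hilt : i < m := by have := Finset.mem_Ico.mp hi; omega
    rcases hk i hilt with h | h <;> simp [h]
  have hcomm : (symb m k (-φ))ᵀ * diagonal d = diagonal d * symb m k φ := by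
    ext r c
    rw [Matrix.mul_diagonal, Matrix.diagonal_mul, Matrix.transpose_apply]
    simp only [symb, Matrix.of_apply, Complex.ofReal_neg, neg_neg]
    have e1 : (if (r : ℕ) = (c : ℕ) + 1 then (1 : ℂ) else 0) * d c
        = d r * (if (r : ℕ) = (c : ℕ) + 1 then k c else 0) := by
      split_ifs with h
      · rw [hdpeel c r h]; ring
      · ring
    have e2 : (if (c : ℕ) = (r : ℕ) + 1 then k r else 0) * d c
        = d r * (if (c : ℕ) = (r : ℕ) + 1 then (1 : ℂ) else 0) := by
      split_ifs with h
      · rw [hdpeel r c h]; ring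
      · ring
    have e3 : (if (c : ℕ) = 0 ∧ (r : ℕ) = m - 1 then k r * Complex.exp (-φ * Complex.I) else 0) * d c
        = d r * (if (r : ℕ) = m - 1 ∧ (c : ℕ) = 0 then Complex.exp (-φ * Complex.I) else 0) := by
      split_ifs with h1 h2 h2
      · rw [hdlast r h1.2]
        have hc0 := hdzero c h1.1
        rw [h1.2]
        linear_combination Complex.exp (-φ * Complex.I) * hc0
      · exact absurd ⟨h1.2, h1.1⟩ h2
      · exact absurd ⟨h2.2, h2.1⟩ h1
      · ring
    have e4 : (if (c : ℕ) = m - 1 ∧ (r : ℕ) = 0 then Complex.exp (φ * Complex.I) else 0) * d c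
        = d r * (if (r : ℕ) = 0 ∧ (c : ℕ) = m - 1 then k c * Complex.exp (φ * Complex.I) else 0) := by
      split_ifs with h1 h2 h2
      · rw [hdlast c h1.1]
        have hr0 := hdzero r h1.2
        rw [h1.1]
        linear_combination -Complex.exp (φ * Complex.I) * hr0
      · exact absurd ⟨h1.2, h1.1⟩ h2
      · exact absurd ⟨h2.2, h2.1⟩ h1
      · ring
    calc ((if (r : ℕ) = (c : ℕ) + 1 then (1:ℂ) else 0) + (if (c : ℕ) = (r : ℕ) + 1 then k r else 0)
            + (if (c : ℕ) = 0 ∧ (r : ℕ) = m - 1 then k r * Complex.exp (-φ * Complex.I) else 0)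
            + (if (c : ℕ) = m - 1 ∧ (r : ℕ) = 0 then Complex.exp (φ * Complex.I) else 0)) * d c
        = (if (r : ℕ) = (c : ℕ) + 1 then (1:ℂ) else 0) * d c
            + (if (c : ℕ) = (r : ℕ) + 1 then k r else 0) * d c
            + (if (c : ℕ) = 0 ∧ (r : ℕ) = m - 1 then k r * Complex.exp (-φ * Complex.I) else 0) * d c
            + (if (c : ℕ) = m - 1 ∧ (r : ℕ) = 0 then Complex.exp (φ * Complex.I) else 0) * d c := by
          ring
      _ = d r * ((if (c : ℕ) = (r : ℕ) + 1 then (1:ℂ) else 0)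
            + (if (r : ℕ) = (c : ℕ) + 1 then k c else 0)
            + (if (r : ℕ) = 0 ∧ (c : ℕ) = m - 1 then k c * Complex.exp (φ * Complex.I) else 0)
            + (if (r : ℕ) = m - 1 ∧ (c : ℕ) = 0 then Complex.exp (-φ * Complex.I) else 0)) := by
          rw [e1, e2, e3, e4]; ring
  have hmain : (lam • (1 : Matrix (Fin m) (Fin m) ℂ) - symb m k (-φ))ᵀ * diagonal d
      = diagonal d * (lam • 1 - symb m k φ) := by
    rw [Matrix.transpose_sub, Matrix.transpose_smul, Matrix.transpose_one, sub_mul, mul_sub, hcomm]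
    congr 1
    simp [Matrix.smul_mul, Matrix.mul_smul]
  have hdet := congrArg Matrix.det hmain
  rw [Matrix.det_mul, Matrix.det_mul, Matrix.det_transpose] at hdet
  have hDne : (diagonal d).det ≠ 0 := by
    rw [Matrix.det_diagonal]; exact Finset.prod_ne_zero_iff.mpr (fun i _ => hdne i)
  exact mul_right_cancel₀ hDne (hdet.trans (mul_comm _ _))

lemma spec_det {m : ℕ} (A : Matrix (Fin m) (Fin m) ℂ) (lam : ℂ)
    (h : lam ∈ spectrum ℂ A) : (lam • (1 : Matrix (Fin m) (Fin m) ℂ) - A).det = 0 := by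
  rw [spectrum.mem_iff] at h
  have ha : algebraMap ℂ (Matrix (Fin m) (Fin m) ℂ) lam = lam • 1 := by
    simp [Algebra.algebraMap_eq_smul_one]
  rw [ha] at h
  by_contra hne
  exact h ((Matrix.isUnit_iff_isUnit_det _).mpr (isUnit_iff_ne_zero.mpr hne))

lemma det_to_eig {m : ℕ} (A : Matrix (Fin m) (Fin m) ℂ) (lam : ℂ)
    (h : (lam • (1 : Matrix (Fin m) (Fin m) ℂ) - A).det = 0) :
    ∃ v, v ≠ 0 ∧ A.mulVec v = lam • v := by
  obtain ⟨v, hv0, hv⟩ := Matrix.exists_mulVec_eq_zero_iff.mpr h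
  refine ⟨v, hv0, ?_⟩
  rw [Matrix.sub_mulVec, Matrix.smul_mulVec, Matrix.one_mulVec, sub_eq_zero] at hv
  exact hv.symm

lemma kron_eig (n m : ℕ) (hn : 3 ≤ n) (A B C : Matrix (Fin m) (Fin m) ℂ)
    (P : Matrix (Fin n) (Fin n) ℂ)
    (hP : ∀ i j : Fin n, P i j = if (i : ℕ) = ((j : ℕ) + 1) % n then 1 else 0)
    (E : ℂ) (hE : E ^ n = 1) (lam : ℂ) (v : Fin m → ℂ)
    (hv : (E⁻¹ • A + B + E • C).mulVec v = lam • v) :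
    (P ⊗ₖ A + 1 ⊗ₖ B + Pᴴ ⊗ₖ C).mulVec (fun p => E ^ (p.1 : ℕ) * v p.2)
      = lam • fun p : Fin n × Fin m => E ^ (p.1 : ℕ) * v p.2 := by
  haveI : NeZero n := ⟨by omega⟩
  have hE0 : E ≠ 0 := by
    intro h; rw [h, zero_pow (by omega : n ≠ 0)] at hE; exact one_ne_zero hE.symm
  have h1 : ((1 : Fin n) : ℕ) = 1 :=
    (Fin.val_one' n).trans (Nat.mod_eq_of_lt (by omega))
  have hadd1 : ∀ x : Fin n, ((x + 1 : Fin n) : ℕ) = ((x : ℕ) + 1) % n := by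
    intro x; rw [Fin.val_add, h1]
  have hpow : ∀ a : ℕ, E ^ (a % n) = E ^ a := by
    intro a
    conv_rhs => rw [← Nat.div_add_mod a n]
    rw [pow_add, pow_mul, hE, one_pow, one_mul]
  have hsucc : ∀ x : Fin n, E ^ ((x + 1 : Fin n) : ℕ) = E ^ (x : ℕ) * E := by
    intro x; rw [hadd1, hpow, pow_succ]
  have hpred : ∀ x : Fin n, E ^ ((x - 1 : Fin n) : ℕ) = E ^ (x : ℕ) * E⁻¹ := by
    intro x
    have := hsucc (x - 1)
    rw [sub_add_cancel] at this
    field_simp [this]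
    exact this.symm
  have hPsum : ∀ (r : Fin n) (f : Fin n → ℂ), (∑ r', P r r' * f r') = f (r - 1) := by
    intro r f
    rw [Finset.sum_eq_single (r - 1)]
    · rw [hP, if_pos, one_mul]
      rw [← hadd1, sub_add_cancel]
    · intro b _ hb
      rw [hP, if_neg, zero_mul]
      intro hc
      apply hb
      have : r = b + 1 := Fin.ext (by rw [hadd1]; exact hc)
      rw [this, add_sub_cancel_right]
    · intro h; exact absurd (Finset.mem_univ _) h
  have hQsum : ∀ (r : Fin n) (f : Fin n → ℂ), (∑ r', Pᴴ r r' * f r') = f (r + 1) := by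
    intro r f
    have hPH : ∀ r' : Fin n, Pᴴ r r' = if (r' : ℕ) = ((r : ℕ) + 1) % n then 1 else 0 := by
      intro r'
      rw [Matrix.conjTranspose_apply, hP]
      split_ifs <;> simp
    rw [Finset.sum_eq_single (r + 1)]
    · rw [hPH, if_pos (hadd1 r), one_mul]
    · intro b _ hb
      rw [hPH, if_neg, zero_mul]
      intro hc
      exact hb (Fin.ext (by rw [hadd1]; exact hc))
    · intro h; exact absurd (Finset.mem_univ _) h
  have kronVec : ∀ (X : Matrix (Fin n) (Fin n) ℂ) (Y : Matrix (Fin m) (Fin m) ℂ)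
      (r : Fin n) (s : Fin m),
      ((X ⊗ₖ Y).mulVec (fun p => E ^ (p.1 : ℕ) * v p.2)) (r, s)
        = (∑ r', X r r' * E ^ (r' : ℕ)) * (Y.mulVec v s) := by
    intro X Y r s
    simp only [Matrix.mulVec, dotProduct, Matrix.kroneckerMap_apply]
    rw [Fintype.sum_prod_type, Finset.sum_mul_sum]
    exact Finset.sum_congr rfl fun r' _ => Finset.sum_congr rfl fun s' _ => by ring
  have honesum : ∀ r : Fin n, (∑ r', (1 : Matrix (Fin n) (Fin n) ℂ) r r' * E ^ (r' : ℕ))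
      = E ^ (r : ℕ) := by
    intro r
    rw [Finset.sum_eq_single r]
    · rw [Matrix.one_apply_eq, one_mul]
    · intro b _ hb; rw [Matrix.one_apply_ne (Ne.symm hb), zero_mul]
    · intro h; exact absurd (Finset.mem_univ _) h
  funext p
  obtain ⟨r, s⟩ := p
  have hvs := congrFun hv s
  simp only [Matrix.add_mulVec, Matrix.smul_mulVec, Pi.add_apply, Pi.smul_apply,
    smul_eq_mul] at hvs
  show ((P ⊗ₖ A + 1 ⊗ₖ B + Pᴴ ⊗ₖ C).mulVec _) (r, s) = _
  have : ((P ⊗ₖ A + 1 ⊗ₖ B + Pᴴ ⊗ₖ C).mulVec fun p => E ^ (p.1 : ℕ) * v p.2) (r, s)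
      = ((P ⊗ₖ A).mulVec fun p => E ^ (p.1 : ℕ) * v p.2) (r, s)
        + (((1 : Matrix (Fin n) (Fin n) ℂ) ⊗ₖ B).mulVec fun p => E ^ (p.1 : ℕ) * v p.2) (r, s)
        + ((Pᴴ ⊗ₖ C).mulVec fun p => E ^ (p.1 : ℕ) * v p.2) (r, s) := by
    rw [Matrix.add_mulVec, Matrix.add_mulVec]; rfl
  rw [this, kronVec, kronVec, kronVec, hPsum r (fun x => E ^ (x : ℕ)),
    hQsum r (fun x => E ^ (x : ℕ)), honesum, hpred, hsucc]
  show _ = lam * (E ^ (r : ℕ) * v s)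
  calc E ^ (r : ℕ) * E⁻¹ * A.mulVec v s + E ^ (r : ℕ) * B.mulVec v s
        + E ^ (r : ℕ) * E * C.mulVec v s
      = E ^ (r : ℕ) * (E⁻¹ * A.mulVec v s + B.mulVec v s + E * C.mulVec v s) := by ring
    _ = E ^ (r : ℕ) * (lam * v s) := by rw [hvs]
    _ = lam * (E ^ (r : ℕ) * v s) := by ring

lemma symb_decomp (m : ℕ) (k : ℕ → ℂ) (φ : ℝ) :
    symb m k φ = Complex.exp (φ * Complex.I) • Am m k + Bm m k
      + Complex.exp (-φ * Complex.I) • Cm m := by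
  ext r c
  simp only [symb, Am, Bm, Cm, Matrix.add_apply, Matrix.smul_apply, Matrix.of_apply,
    smul_eq_mul, mul_ite, mul_zero, mul_one]
  split_ifs <;> ring

theorem eigenspace_dim_ge_two
    (m : ℕ) (hm : 1 ≤ m) (k : ℕ → ℂ) (hk : ∀ i < m, k i = 1 ∨ k i = -1)
    (hprod : ∏ j ∈ Finset.range m, k j = 1)
    (n : ℕ) (hn : 3 ≤ n)
    (P : Matrix (Fin n) (Fin n) ℂ)
    (hP : ∀ i j : Fin n, P i j = if (i : ℕ) = ((j : ℕ) + 1) % n then 1 else 0) :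
    ∀ j : ℕ, 1 ≤ j → j ≤ n - 1 → 2 * j ≠ n →
      ∀ lam : ℂ, lam ∈ spectrum ℂ (symb m k (2 * Real.pi * j / n)) →
        2 ≤ Module.finrank ℂ
          (Module.End.eigenspace
            (Matrix.toLin' (P ⊗ₖ Am m k + 1 ⊗ₖ Bm m k + Pᴴ ⊗ₖ Cm m)) lam) := by
  intro j hj1 hj2 hjn lam hlam
  haveI : NeZero n := ⟨by omega⟩
  set φ : ℝ := 2 * Real.pi * j / n with hφ
  set E₂ : ℂ := Complex.exp (φ * Complex.I) with hE₂def
  set E₁ : ℂ := Complex.exp (-φ * Complex.I) with hE₁def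
  have hncast : (n : ℂ) ≠ 0 := by
    simp only [ne_eq, Nat.cast_eq_zero]; omega
  have hkey : (n : ℂ) * ((φ : ℂ) * Complex.I) = (j : ℂ) * (2 * (Real.pi : ℂ) * Complex.I) := by
    rw [hφ]
    push_cast
    field_simp
  have hE₂pow : E₂ ^ n = 1 := by
    rw [hE₂def, ← Complex.exp_nat_mul, hkey]
    exact_mod_cast Complex.exp_int_mul_two_pi_mul_I (j : ℤ)
  have hE₁₂ : E₁ = E₂⁻¹ := by
    rw [hE₁def, hE₂def, ← Complex.exp_neg]; ring_nf
  have hE₁pow : E₁ ^ n = 1 := by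
    rw [hE₁₂, inv_pow, hE₂pow, inv_one]
  have hE₂ne : E₂ ≠ 0 := Complex.exp_ne_zero _
  have hE₁ne : E₁ ≠ 0 := Complex.exp_ne_zero _
  have hE₁inv : E₁⁻¹ = E₂ := by rw [hE₁₂, inv_inv]
  -- first eigenvector of the symbol
  have hdet1 : (lam • (1 : Matrix (Fin m) (Fin m) ℂ) - symb m k φ).det = 0 :=
    spec_det _ _ hlam
  obtain ⟨v, hv0, hv⟩ := det_to_eig _ _ hdet1
  -- second eigenvector from the symbol at -φ
  have hdet2 : (lam • (1 : Matrix (Fin m) (Fin m) ℂ) - symb m k (-φ)).det = 0 :=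
    (det_symb_neg m hm k hk hprod φ lam).trans hdet1
  obtain ⟨w, hw0, hw⟩ := det_to_eig _ _ hdet2
  -- the symbol decompositions
  have hsd1 : E₁⁻¹ • Am m k + Bm m k + E₁ • Cm m = symb m k φ := by
    rw [symb_decomp, hE₁inv, hE₁def, hE₂def]
  have hsd2 : E₂⁻¹ • Am m k + Bm m k + E₂ • Cm m = symb m k (-φ) := by
    rw [symb_decomp, ← hE₁₂, hE₁def, hE₂def]
    congr 1
    · congr 2
      push_cast
      ring
    · congr 1
      push_cast
      ring
  -- eigenvectors of the big matrix
  set M : Matrix (Fin n × Fin m) (Fin n × Fin m) ℂ :=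
    P ⊗ₖ Am m k + 1 ⊗ₖ Bm m k + Pᴴ ⊗ₖ Cm m with hM
  set u : Fin n × Fin m → ℂ := fun p => E₁ ^ (p.1 : ℕ) * v p.2 with hu
  set u' : Fin n × Fin m → ℂ := fun p => E₂ ^ (p.1 : ℕ) * w p.2 with hu'
  have hMu : M.mulVec u = lam • u := by
    apply kron_eig n m hn _ _ _ P hP E₁ hE₁pow lam v
    rw [hsd1]; exact hv
  have hMu' : M.mulVec u' = lam • u' := by
    apply kron_eig n m hn _ _ _ P hP E₂ hE₂pow lam w
    rw [hsd2]; exact hw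
  -- E₁ ≠ E₂
  have hEne : E₁ ≠ E₂ := by
    intro hEq
    have h2 : Complex.exp ((φ : ℂ) * Complex.I + (φ : ℂ) * Complex.I) = 1 := by
      rw [Complex.exp_add]
      show E₂ * E₂ = 1
      have hmix : E₂ * E₁ = 1 := by
        rw [hE₂def, hE₁def, ← Complex.exp_add]
        have harg : (φ:ℂ) * Complex.I + -(φ:ℂ) * Complex.I = 0 := by ring
        rw [harg, Complex.exp_zero]
      rw [hEq] at hmix
      exact hmix
    rw [Complex.exp_eq_one_iff] at h2
    obtain ⟨t, ht⟩ := h2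
    have hI : ((φ : ℂ) + (φ : ℂ)) * Complex.I = ((t : ℂ) * (2 * (Real.pi:ℂ))) * Complex.I := by
      rw [add_mul]; rw [ht]; ring
    have hre : (φ : ℂ) + (φ : ℂ) = (t : ℂ) * (2 * (Real.pi : ℂ)) :=
      mul_right_cancel₀ Complex.I_ne_zero hI
    have hreal : (φ : ℝ) + φ = t * (2 * Real.pi) := by
      exact_mod_cast hre
    rw [hφ] at hreal
    have hπ : Real.pi ≠ 0 := Real.pi_ne_zero
    have hnR : (n : ℝ) ≠ 0 := by
      simp only [ne_eq, Nat.cast_eq_zero]; omega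
    have hjt : (2 * j : ℝ) = t * n := by
      field_simp at hreal
      nlinarith [hreal, Real.pi_pos]
    have hjtz : (2 * j : ℤ) = t * n := by exact_mod_cast hjt
    have hj1' : (1 : ℤ) ≤ (j : ℤ) := by exact_mod_cast hj1
    have hjn' : (j : ℤ) + 1 ≤ (n : ℤ) := by
      have : j + 1 ≤ n := by omega
      exact_mod_cast this
    have hjnn : (2 * j : ℤ) ≠ (n : ℤ) := by exact_mod_cast hjn
    have hnpos : (0 : ℤ) < (n : ℤ) := by positivity
    rcases lt_trichotomy t 1 with hlt | heq | hgt
    · have ht0 : t ≤ 0 := by omega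
      have : t * n ≤ 0 := mul_nonpos_iff.mpr (Or.inr ⟨ht0, le_of_lt hnpos⟩)
      omega
    · rw [heq, one_mul] at hjtz
      exact hjnn hjtz
    · have ht2 : 2 ≤ t := by omega
      have : 2 * (n:ℤ) ≤ t * n := mul_le_mul_of_nonneg_right ht2 (le_of_lt hnpos)
      omega
  -- linear independence in the ambient space
  have hvex : ∃ a, v a ≠ 0 := Function.ne_iff.mp hv0
  have hwex : ∃ a, w a ≠ 0 := Function.ne_iff.mp hw0
  have hzero : ((0 : Fin n) : ℕ) = 0 := rfl
  have hone : ((1 : Fin n) : ℕ) = 1 :=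
    (Fin.val_one' n).trans (Nat.mod_eq_of_lt (by omega))
  have hind : LinearIndependent ℂ ![u, u'] := by
    rw [LinearIndependent.pair_iff]
    intro s t hst
    have e0 : ∀ a : Fin m, s * v a + t * w a = 0 := by
      intro a
      have h := congrFun hst ((0 : Fin n), a)
      simp only [Pi.add_apply, Pi.smul_apply, smul_eq_mul, Pi.zero_apply, hu, hu'] at h
      rw [hzero] at h
      linear_combination h
    have e1 : ∀ a : Fin m, s * (E₁ * v a) + t * (E₂ * w a) = 0 := by
      intro a
      have h := congrFun hst ((1 : Fin n), a)
      simp only [Pi.add_apply, Pi.smul_apply, smul_eq_mul, Pi.zero_apply, hu, hu'] at h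
      rw [hone] at h
      linear_combination h
    have hs : s = 0 := by
      obtain ⟨a, ha⟩ := hvex
      have hkey2 : s * (E₁ - E₂) * v a = 0 := by
        linear_combination (e1 a) - E₂ * (e0 a)
      rcases mul_eq_zero.mp hkey2 with h | h
      · rcases mul_eq_zero.mp h with h' | h'
        · exact h'
        · exact absurd (sub_eq_zero.mp h') hEne
      · exact absurd h ha
    refine ⟨hs, ?_⟩
    obtain ⟨a, ha⟩ := hwex
    have := e0 a
    rw [hs, zero_mul, zero_add] at this
    rcases mul_eq_zero.mp this with h | h
    · exact h
    · exact absurd h ha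
  -- package into the eigenspace
  set S := Module.End.eigenspace (Matrix.toLin' M) lam with hS
  have hus : u ∈ S := by
    rw [hS, Module.End.mem_eigenspace_iff, Matrix.toLin'_apply]
    exact hMu
  have hu's : u' ∈ S := by
    rw [hS, Module.End.mem_eigenspace_iff, Matrix.toLin'_apply]
    exact hMu'
  have hindS : LinearIndependent ℂ (![(⟨u, hus⟩ : S), ⟨u', hu's⟩]) := by
    apply LinearIndependent.of_comp S.subtype
    have : (S.subtype : S → _) ∘ ![(⟨u, hus⟩ : S), ⟨u', hu's⟩] = ![u, u'] := by
      funext i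
      fin_cases i <;> rfl
    rw [this]
    exact hind
  have := hindS.fintype_card_le_finrank
  simpa using this
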